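/- Let d ≥ 1, m ∈ ℕ, and let V : ℝ^d → ℝ be of class C^m with all partial derivatives of order ≤ m bounded. There exists a constant C ∈ (0,∞), depending only on m, d, and ‖V‖_{C^m}, such that for all u, h : ℝ^d → ℂ of class C^m with all partial derivatives of order ≤ m in L², the function x ↦ (V ⋆ |u|²)(x) h(x) + 2 (V ⋆ Re(ū h))(x) u(x) (which is the first derivative Ψ₀'(u).h of Ψ₀(u) = (V ⋆ |u|²)u at u in direction h) satisfies ‖(V ⋆ |u|²) h + 2 (V ⋆ Re(ū h)) u‖_{H^m} ≤ C ‖u‖_{L²} ‖u‖_{H^m} ‖h‖_{H^m}. -/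

import Mathlib

set_option maxHeartbeats 1000000
set_option synthInstance.maxHeartbeats 400000


open MeasureTheory Filter
open scoped ENNReal NNReal BigOperators Topology

noncomputable section

/-- Partial derivative in coordinate direction `i`. -/
def pd {d : ℕ} {E : Type*} [NormedAddCommGroup E] [NormedSpace ℝ E]
    (i : Fin d) (f : (Fin d → ℝ) → E) : (Fin d → ℝ) → E :=
  fun x => fderiv ℝ f x (Pi.single i 1)

/-- Iterated partial derivative associated with the multi-index `α`. -/
def md {d : ℕ} {E : Type*} [NormedAddCommGroup E] [NormedSpace ℝ E]
    (α : Fin d → ℕ) (f : (Fin d → ℝ) → E) : (Fin d → ℝ) → E :=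
  (List.finRange d).foldr (fun i g => (pd i)^[α i] g) f

/-- L² norm on ℝ^d. -/
def l2norm {d : ℕ} {E : Type*} [NormedAddCommGroup E]
    (f : (Fin d → ℝ) → E) : ℝ :=
  (eLpNorm f 2 (volume : Measure (Fin d → ℝ))).toReal

/-- Sobolev `H^m` norm. -/
def hnorm (d m : ℕ) {E : Type*} [NormedAddCommGroup E] [NormedSpace ℝ E]
    (f : (Fin d → ℝ) → E) : ℝ :=
  Real.sqrt (∑ α : Fin d → Fin (m + 1),
    if (∑ i, (α i : ℕ)) ≤ m then (l2norm (md (fun i => (α i : ℕ)) f)) ^ 2 else 0)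

/-- `C^m` norm: sup over multi-indices of order at most `m` and over points. -/
def cnorm (d m : ℕ) {E : Type*} [NormedAddCommGroup E] [NormedSpace ℝ E]
    (f : (Fin d → ℝ) → E) : ℝ :=
  ⨆ α : Fin d → Fin (m + 1), ⨆ x : Fin d → ℝ,
    if (∑ i, (α i : ℕ)) ≤ m then ‖md (fun i => (α i : ℕ)) f x‖ else 0

/-- `f` is of class `C^m` with all partial derivatives of order at most `m` bounded. -/
def ContDiffBdd (d m : ℕ) {E : Type*} [NormedAddCommGroup E] [NormedSpace ℝ E]
    (f : (Fin d → ℝ) → E) : Prop :=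
  ContDiff ℝ m f ∧ ∀ α : Fin d → ℕ, (∑ i, α i) ≤ m → ∃ B : ℝ, ∀ x, ‖md α f x‖ ≤ B

/-- `f` is of class `C^m` with all partial derivatives of order at most `m` in `L²`. -/
def ContDiffL2 (d m : ℕ) {E : Type*} [NormedAddCommGroup E] [NormedSpace ℝ E]
    (f : (Fin d → ℝ) → E) : Prop :=
  ContDiff ℝ m f ∧ ∀ α : Fin d → ℕ, (∑ i, α i) ≤ m →
    MemLp (md α f) 2 (volume : Measure (Fin d → ℝ))

/-- Fourier transform with kernel `exp(-2πi⟨x,ζ⟩)`. -/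
def ftrans {d : ℕ} (f : (Fin d → ℝ) → ℂ) (ζ : Fin d → ℝ) : ℂ :=
  ∫ x : Fin d → ℝ, Complex.exp (-(2 * Real.pi * Complex.I * (∑ i, x i * ζ i))) * f x

end


noncomputable section

variable {d : ℕ} {E : Type*} [NormedAddCommGroup E] [NormedSpace ℝ E]

def pds (ℓ : List (Fin d)) (f : (Fin d → ℝ) → E) : (Fin d → ℝ) → E :=
  ℓ.foldr (fun i g => pd i g) f

@[simp] lemma pds_nil (f : (Fin d → ℝ) → E) : pds [] f = f := rfl

@[simp] lemma pds_cons (j : Fin d) (ℓ : List (Fin d)) (f : (Fin d → ℝ) → E) :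
    pds (j :: ℓ) f = pd j (pds ℓ f) := rfl

def canon (α : Fin d → ℕ) : List (Fin d) :=
  (List.finRange d).flatMap (fun i => List.replicate (α i) i)

lemma pds_append (ℓ₁ ℓ₂ : List (Fin d)) (f : (Fin d → ℝ) → E) :
    pds (ℓ₁ ++ ℓ₂) f = pds ℓ₁ (pds ℓ₂ f) := by
  induction ℓ₁ with
  | nil => rfl
  | cons j ℓ ih => simp [pds_cons, ih]

lemma pds_replicate (n : ℕ) (i : Fin d) (f : (Fin d → ℝ) → E) :
    pds (List.replicate n i) f = (pd i)^[n] f := by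
  induction n generalizing f with
  | zero => rfl
  | succ n ih =>
      rw [List.replicate_succ, pds_cons, ih]
      exact (Function.iterate_succ_apply' _ _ _).symm

lemma md_eq_pds (α : Fin d → ℕ) (f : (Fin d → ℝ) → E) : md α f = pds (canon α) f := by
  unfold md canon
  induction (List.finRange d) with
  | nil => rfl
  | cons j L ih => simp [List.flatMap_cons, pds_append, pds_replicate, ih]

@[simp] lemma md_zero (f : (Fin d → ℝ) → E) : md (fun _ => 0) f = f := by
  rw [md_eq_pds]
  have : canon (fun _ : Fin d => 0) = [] := by simp [canon]
  rw [this, pds_nil]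

lemma count_canon (α : Fin d → ℕ) (a : Fin d) : (canon α).count a = α a := by
  unfold canon
  rw [List.count_flatMap]
  have : (List.map (List.count a ∘ fun i => List.replicate (α i) i) (List.finRange d)).sum
      = ∑ i : Fin d, (if i = a then α i else 0) := by
    rw [Fin.sum_univ_def]
    congr 1
    apply List.map_congr_left
    intro i _
    simp [List.count_replicate]
  rw [this, Finset.sum_ite_eq' Finset.univ a]
  simp

lemma length_canon (α : Fin d → ℕ) : (canon α).length = ∑ i, α i := by
  unfold canon
  rw [List.length_flatMap, Fin.sum_univ_def]
  congr 1
  apply List.map_congr_left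
  intro i _
  simp

lemma sum_count (ℓ : List (Fin d)) : ∑ i, ℓ.count i = ℓ.length := by
  induction ℓ with
  | nil => simp
  | cons j ℓ ih =>
      have h1 : ∀ i : Fin d, (j :: ℓ).count i = ℓ.count i + (if j = i then 1 else 0) := by
        intro i; rw [List.count_cons]; congr 1
        by_cases hij : i = j
        · subst hij; simp
        · simp [hij, Ne.symm hij]
      rw [Finset.sum_congr rfl (fun i _ => h1 i), Finset.sum_add_distrib, ih,
        Finset.sum_ite_eq Finset.univ j]
      simp

lemma canon_count_perm (ℓ : List (Fin d)) : (canon (fun i => ℓ.count i)).Perm ℓ := by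
  rw [List.perm_iff_count]
  intro a
  rw [count_canon]

lemma contDiff_pd {k : ℕ} {g : (Fin d → ℝ) → E} (j : Fin d)
    (hg : ContDiff ℝ (k + 1 : ℕ) g) : ContDiff ℝ (k : ℕ) (pd j g) := by
  have h1 : ContDiff ℝ (k : ℕ) (fderiv ℝ g) := by
    apply hg.fderiv_right
    norm_cast
  exact h1.clm_apply contDiff_const

lemma contDiff_pds {m : ℕ} {f : (Fin d → ℝ) → E} (hf : ContDiff ℝ (m : ℕ) f)
    (ℓ : List (Fin d)) (k : ℕ) (h : ℓ.length + k ≤ m) : ContDiff ℝ (k : ℕ) (pds ℓ f) := by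
  induction ℓ generalizing k with
  | nil => exact hf.of_le (by exact_mod_cast (show k ≤ m by simpa using h))
  | cons j ℓ ih =>
      rw [pds_cons]
      apply contDiff_pd
      apply ih
      simp only [List.length_cons] at h
      omega

lemma differentiable_pds {m : ℕ} {f : (Fin d → ℝ) → E} (hf : ContDiff ℝ (m : ℕ) f)
    (ℓ : List (Fin d)) (h : ℓ.length < m) : Differentiable ℝ (pds ℓ f) := by
  have := contDiff_pds hf ℓ 1 (by omega)
  exact this.differentiable (by norm_cast)

lemma continuous_pds {m : ℕ} {f : (Fin d → ℝ) → E} (hf : ContDiff ℝ (m : ℕ) f)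
    (ℓ : List (Fin d)) (h : ℓ.length ≤ m) : Continuous (pds ℓ f) := by
  have := contDiff_pds hf ℓ 0 (by omega)
  exact this.continuous

lemma pd_comm {g : (Fin d → ℝ) → E} (hg : ContDiff ℝ 2 g) (i j : Fin d) :
    pd i (pd j g) = pd j (pd i g) := by
  have hdg : Differentiable ℝ g := hg.differentiable (by norm_num)
  have hfd : Differentiable ℝ (fderiv ℝ g) := by
    have : ContDiff ℝ (1:ℕ) (fderiv ℝ g) := by
      apply hg.fderiv_right; norm_num
    exact this.differentiable (by norm_cast)
  funext x
  have key : ∀ v w : Fin d → ℝ, fderiv ℝ (fun y => fderiv ℝ g y w) x v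
      = (fderiv ℝ (fderiv ℝ g) x v) w := by
    intro v w
    have := fderiv_clm_apply (c := fderiv ℝ g) (u := fun _ => w) (hfd x) (differentiableAt_const w)
    rw [this]
    simp
  show fderiv ℝ (fun y => fderiv ℝ g y (Pi.single j 1)) x (Pi.single i 1)
      = fderiv ℝ (fun y => fderiv ℝ g y (Pi.single i 1)) x (Pi.single j 1)
  rw [key, key]
  exact second_derivative_symmetric (fun y => (hdg y).hasFDerivAt) ((hfd x).hasFDerivAt) _ _

lemma pds_perm {m : ℕ} {f : (Fin d → ℝ) → E} (hf : ContDiff ℝ (m : ℕ) f)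
    {ℓ ℓ' : List (Fin d)} (hp : ℓ.Perm ℓ') (hl : ℓ.length ≤ m) : pds ℓ f = pds ℓ' f := by
  induction hp with
  | nil => rfl
  | cons x _ ih =>
      simp only [pds_cons]
      rw [ih (by simpa using Nat.le_of_succ_le hl)]
  | swap x y l =>
      simp only [pds_cons]
      have h2 : ContDiff ℝ (2:ℕ) (pds l f) := by
        apply contDiff_pds hf l 2
        simp only [List.length_cons] at hl; omega
      rw [pd_comm (by exact_mod_cast h2) y x]
  | trans h12 _ ih1 ih2 =>
      rw [ih1 hl, ih2 (by rwa [← h12.length_eq])]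

lemma pds_eq_md {m : ℕ} {f : (Fin d → ℝ) → E} (hf : ContDiff ℝ (m : ℕ) f)
    (ℓ : List (Fin d)) (hl : ℓ.length ≤ m) : pds ℓ f = md (fun i => ℓ.count i) f := by
  rw [md_eq_pds]
  apply pds_perm hf (canon_count_perm ℓ).symm
  exact hl


section Lists
variable {ι : Type*}

lemma hasFDerivAt_list_sum (L : List ι) (F : ι → (Fin d → ℝ) → E)
    (F' : ι → (Fin d → ℝ) →L[ℝ] E) {x : Fin d → ℝ}
    (h : ∀ p ∈ L, HasFDerivAt (F p) (F' p) x) :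
    HasFDerivAt (fun y => (L.map (fun p => F p y)).sum) ((L.map F').sum) x := by
  induction L with
  | nil => simpa using hasFDerivAt_const (0 : E) x
  | cons p L ih =>
      simp only [List.map_cons, List.sum_cons]
      exact (h p (by simp)).add (ih (fun q hq => h q (by simp [hq])))

lemma clm_list_sum_apply (L : List ι) (F' : ι → (Fin d → ℝ) →L[ℝ] E) (v : Fin d → ℝ) :
    ((L.map F').sum) v = (L.map (fun p => F' p v)).sum := by
  induction L with
  | nil => simp
  | cons p L ih => simp [ih]

lemma pd_list_sum (j : Fin d) (L : List ι) (F : ι → (Fin d → ℝ) → E)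
    (hdiff : ∀ p ∈ L, Differentiable ℝ (F p)) :
    pd j (fun y => (L.map (fun p => F p y)).sum) = fun y => (L.map (fun p => pd j (F p) y)).sum := by
  funext x
  have h := hasFDerivAt_list_sum L F (fun p => fderiv ℝ (F p) x)
    (fun p hp => ((hdiff p hp) x).hasFDerivAt)
  show fderiv ℝ _ x (Pi.single j 1) = _
  rw [h.fderiv, clm_list_sum_apply]
  rfl

lemma differentiable_list_sum (L : List ι) (F : ι → (Fin d → ℝ) → E)
    (h : ∀ p ∈ L, Differentiable ℝ (F p)) :
    Differentiable ℝ (fun y => (L.map (fun p => F p y)).sum) := by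
  induction L with
  | nil => simpa using differentiable_const (0 : E)
  | cons p L ih =>
      simp only [List.map_cons, List.sum_cons]
      exact (h p (by simp)).add (ih (fun q hq => h q (by simp [hq])))

lemma continuousListSum (L : List ι) (F : ι → (Fin d → ℝ) → E)
    (h : ∀ p ∈ L, Continuous (F p)) :
    Continuous (fun y => (L.map (fun p => F p y)).sum) := by
  induction L with
  | nil => simpa using continuous_const
  | cons p L ih =>
      simp only [List.map_cons, List.sum_cons]
      exact (h p (by simp)).add (ih (fun q hq => h q (by simp [hq])))

end Lists

lemma pd_add {f g : (Fin d → ℝ) → E} (j : Fin d) (hf : Differentiable ℝ f)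
    (hg : Differentiable ℝ g) :
    pd j (fun x => f x + g x) = fun x => pd j f x + pd j g x := by
  funext x
  show fderiv ℝ _ x _ = _
  rw [fderiv_fun_add (hf x) (hg x)]
  rfl

lemma pds_add {n : ℕ} {f g : (Fin d → ℝ) → E}
    (hf : ∀ ℓ', ℓ'.length < n → Differentiable ℝ (pds ℓ' f))
    (hg : ∀ ℓ', ℓ'.length < n → Differentiable ℝ (pds ℓ' g)) :
    ∀ ℓ : List (Fin d), ℓ.length ≤ n →
      pds ℓ (fun x => f x + g x) = fun x => pds ℓ f x + pds ℓ g x := by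
  intro ℓ
  induction ℓ with
  | nil => intro _; rfl
  | cons j ℓ ih =>
      intro hl
      simp only [List.length_cons] at hl
      rw [pds_cons, ih (by omega)]
      exact pd_add j (hf ℓ (by omega)) (hg ℓ (by omega))

/-- All ways to split derivatives between the two factors of a product. -/
def splits : List (Fin d) → List (List (Fin d) × List (Fin d))
  | [] => [([], [])]
  | j :: ℓ => (splits ℓ).flatMap (fun p => [(j :: p.1, p.2), (p.1, j :: p.2)])

lemma splits_length {ℓ : List (Fin d)} {p : List (Fin d) × List (Fin d)}
    (hp : p ∈ splits ℓ) : p.1.length + p.2.length = ℓ.length := by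
  induction ℓ generalizing p with
  | nil => simp [splits] at hp; simp [hp]
  | cons j ℓ ih =>
      simp only [splits, List.mem_flatMap] at hp
      obtain ⟨q, hq, hpq⟩ := hp
      have := ih hq
      simp only [List.mem_cons, List.mem_singleton] at hpq
      rcases hpq with h | h | h
      · subst h; simp only [List.length_cons]; omega
      · subst h; simp only [List.length_cons]; omega
      · simp at h

lemma length_splits (ℓ : List (Fin d)) : (splits ℓ).length = 2 ^ ℓ.length := by
  induction ℓ with
  | nil => rfl
  | cons j ℓ ih =>
      simp only [splits, List.length_flatMap, List.length_cons]
      simp only [List.length_nil, Nat.reduceAdd]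
      rw [List.map_const', List.sum_replicate, ih, smul_eq_mul, pow_succ]


lemma list_sum_flatMap {α β M : Type*} [AddCommMonoid M] (l : List α) (g : α → List β)
    (f : β → M) : ((l.flatMap g).map f).sum = (l.map (fun a => ((g a).map f).sum)).sum := by
  induction l with
  | nil => rfl
  | cons a l ih => simp [List.flatMap_cons, ih]

lemma pd_mul {φ ψ : (Fin d → ℝ) → ℂ} (j : Fin d) (hφ : Differentiable ℝ φ)
    (hψ : Differentiable ℝ ψ) :
    pd j (fun x => φ x * ψ x) = fun x => pd j φ x * ψ x + φ x * pd j ψ x := by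
  funext x
  show fderiv ℝ _ x _ = _
  rw [fderiv_fun_mul (hφ x) (hψ x)]
  show φ x • fderiv ℝ ψ x (Pi.single j 1) + ψ x • fderiv ℝ φ x (Pi.single j 1) = _
  simp only [smul_eq_mul]
  show φ x * pd j ψ x + ψ x * pd j φ x = _
  ring

lemma pds_mul {n : ℕ} {φ ψ : (Fin d → ℝ) → ℂ}
    (hφ : ∀ ℓ', ℓ'.length < n → Differentiable ℝ (pds ℓ' φ))
    (hψ : ∀ ℓ', ℓ'.length < n → Differentiable ℝ (pds ℓ' ψ)) :
    ∀ ℓ : List (Fin d), ℓ.length ≤ n →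
      pds ℓ (fun x => φ x * ψ x)
        = fun x => ((splits ℓ).map (fun p => pds p.1 φ x * pds p.2 ψ x)).sum := by
  intro ℓ
  induction ℓ with
  | nil => intro _; simp [splits]
  | cons j ℓ ih =>
      intro hl
      simp only [List.length_cons] at hl
      rw [pds_cons, ih (by omega)]
      rw [pd_list_sum j (splits ℓ) (fun p => fun x => pds p.1 φ x * pds p.2 ψ x)
        (fun p hp => by
          have hlen := splits_length hp
          exact (hφ p.1 (by omega)).mul (hψ p.2 (by omega)))]
      funext x
      have hterm : ∀ p ∈ splits ℓ, pd j (fun x => pds p.1 φ x * pds p.2 ψ x) x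
          = pds (j :: p.1) φ x * pds p.2 ψ x + pds p.1 φ x * pds (j :: p.2) ψ x := by
        intro p hp
        have hlen := splits_length hp
        rw [pd_mul j (hφ p.1 (by omega)) (hψ p.2 (by omega))]
        rfl
      rw [List.map_congr_left hterm]
      have hs : splits (j :: ℓ)
          = (splits ℓ).flatMap (fun p => [(j :: p.1, p.2), (p.1, j :: p.2)]) := rfl
      rw [hs, list_sum_flatMap]
      simp

lemma pds_ofReal {n : ℕ} {g : (Fin d → ℝ) → ℝ}
    (hg : ∀ ℓ', ℓ'.length < n → Differentiable ℝ (pds ℓ' g)) :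
    ∀ ℓ : List (Fin d), ℓ.length ≤ n →
      pds ℓ (fun x => ((g x : ℝ) : ℂ)) = fun x => ((pds ℓ g x : ℝ) : ℂ) := by
  intro ℓ
  induction ℓ with
  | nil => intro _; rfl
  | cons j ℓ ih =>
      intro hl
      simp only [List.length_cons] at hl
      rw [pds_cons, ih (by omega)]
      funext x
      have hdg : Differentiable ℝ (pds ℓ g) := hg ℓ (by omega)
      have hc : HasFDerivAt (fun y => ((pds ℓ g y : ℝ) : ℂ))
          (Complex.ofRealCLM.comp (fderiv ℝ (pds ℓ g) x)) x := by
        exact Complex.ofRealCLM.hasFDerivAt.comp x (hdg x).hasFDerivAt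
      show fderiv ℝ _ x _ = _
      rw [hc.fderiv]
      rfl


lemma vec_eq_sum (v : Fin d → ℝ) : v = ∑ i, v i • (Pi.single i 1 : Fin d → ℝ) := by
  funext j
  rw [Finset.sum_apply]
  have : ∀ i, (v i • (Pi.single i 1 : Fin d → ℝ)) j = if j = i then v i else 0 := by
    intro i
    simp [Pi.single_apply, mul_ite]
  rw [Finset.sum_congr rfl (fun i _ => this i), Finset.sum_ite_eq Finset.univ j]
  simp

lemma fderiv_pi_bound {g : (Fin d → ℝ) → E} {x : Fin d → ℝ}
    {C : ℝ} (hC : ∀ i, ‖fderiv ℝ g x (Pi.single i 1)‖ ≤ C) (hC0 : 0 ≤ C) :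
    ‖fderiv ℝ g x‖ ≤ d * C := by
  apply ContinuousLinearMap.opNorm_le_bound _ (by positivity)
  intro v
  conv_lhs => rw [show fderiv ℝ g x v = ∑ i, v i • fderiv ℝ g x (Pi.single i 1) by
    conv_lhs => rw [vec_eq_sum v]
    rw [map_sum]
    exact Finset.sum_congr rfl (fun i _ => by rw [(fderiv ℝ g x).map_smul])]
  calc ‖∑ i, v i • fderiv ℝ g x (Pi.single i 1)‖
      ≤ ∑ i, ‖v i • fderiv ℝ g x (Pi.single i 1)‖ := norm_sum_le _ _
    _ ≤ ∑ _i : Fin d, ‖v‖ * C := by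
        apply Finset.sum_le_sum
        intro i _
        rw [norm_smul]
        exact mul_le_mul (norm_le_pi_norm v i) (hC i) (norm_nonneg _) (norm_nonneg _)
    _ = d * C * ‖v‖ := by
        rw [Finset.sum_const, Finset.card_univ, Fintype.card_fin, nsmul_eq_mul]
        ring

section Conv

variable {w V' : (Fin d → ℝ) → ℝ}

/-- convolution -/
def cnv (V' w : (Fin d → ℝ) → ℝ) : (Fin d → ℝ) → ℝ := fun x => ∫ y, V' (x - y) * w y

lemma hasFDerivAt_cnv (hw : Integrable w volume) (hV' : Differentiable ℝ V')
    (hfc : Continuous (fderiv ℝ V')) {B L : ℝ} (hB : ∀ x, ‖V' x‖ ≤ B)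
    (hL : ∀ x, ‖fderiv ℝ V' x‖ ≤ L) (x₀ : Fin d → ℝ) :
    HasFDerivAt (cnv V' w) (∫ y, w y • fderiv ℝ V' (x₀ - y)) x₀ := by
  have hmeas : ∀ x : Fin d → ℝ, AEStronglyMeasurable (fun y => V' (x - y) * w y) volume :=
    fun x => ((hV'.continuous.comp (continuous_const.sub continuous_id)).aestronglyMeasurable).mul
      hw.1
  apply hasFDerivAt_integral_of_dominated_of_fderiv_le (𝕜 := ℝ)
    (F' := fun x y => w y • fderiv ℝ V' (x - y)) (bound := fun y => ‖w y‖ * L)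
    (s := Metric.ball x₀ 1) (Metric.ball_mem_nhds x₀ one_pos)
  · exact Eventually.of_forall hmeas
  · apply (hw.norm.const_mul B).mono' (hmeas x₀)
    apply Eventually.of_forall
    intro y
    rw [norm_mul]
    exact mul_le_mul_of_nonneg_right (hB _) (norm_nonneg _)
  · exact hw.1.smul ((hfc.comp (continuous_const.sub continuous_id)).aestronglyMeasurable)
  · apply Eventually.of_forall
    intro y x _
    exact le_trans (norm_smul_le (w y) (fderiv ℝ V' (x - y))) (mul_le_mul_of_nonneg_left (hL _) (norm_nonneg _))
  · exact hw.norm.mul_const L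
  · apply Eventually.of_forall
    intro y x _
    have h1 : HasFDerivAt (fun x : Fin d → ℝ => x - y) (ContinuousLinearMap.id ℝ _) x :=
      (hasFDerivAt_id x).sub_const y
    have h2 := ((hV' (x - y)).hasFDerivAt.comp x h1).mul_const (w y)
    simpa using h2

lemma integrable_cnv_deriv (hw : Integrable w volume) (hfc : Continuous (fderiv ℝ V'))
    {L : ℝ} (hL : ∀ x, ‖fderiv ℝ V' x‖ ≤ L) (x₀ : Fin d → ℝ) :
    Integrable (fun y => w y • fderiv ℝ V' (x₀ - y)) volume := by
  apply (hw.norm.mul_const L).mono'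
    (hw.1.smul ((hfc.comp (continuous_const.sub continuous_id)).aestronglyMeasurable))
  apply Eventually.of_forall
  intro y
  exact le_trans (norm_smul_le (w y) (fderiv ℝ V' (x₀ - y))) (mul_le_mul_of_nonneg_left (hL _) (norm_nonneg _))

lemma pd_cnv (hw : Integrable w volume) (hV' : Differentiable ℝ V')
    (hfc : Continuous (fderiv ℝ V')) {B L : ℝ} (hB : ∀ x, ‖V' x‖ ≤ B)
    (hL : ∀ x, ‖fderiv ℝ V' x‖ ≤ L) (j : Fin d) :
    pd j (cnv V' w) = cnv (pd j V') w := by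
  funext x
  show fderiv ℝ (cnv V' w) x (Pi.single j 1) = _
  rw [(hasFDerivAt_cnv hw hV' hfc hB hL x).fderiv]
  rw [ContinuousLinearMap.integral_apply (integrable_cnv_deriv hw hfc hL x)]
  apply integral_congr_ae
  apply Eventually.of_forall
  intro y
  show w y • fderiv ℝ V' (x - y) (Pi.single j 1) = pd j V' (x - y) * w y
  simp [pd, mul_comm]

lemma cnv_bound (hw : Integrable w volume) {B : ℝ} (hB : ∀ x, ‖V' x‖ ≤ B)
    (hm : AEStronglyMeasurable V' volume) (x : Fin d → ℝ) :
    ‖cnv V' w x‖ ≤ B * ∫ y, ‖w y‖ := by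
  have h1 : ‖cnv V' w x‖ ≤ ∫ y, B * ‖w y‖ := by
    apply norm_integral_le_of_norm_le (hw.norm.const_mul B)
    apply Eventually.of_forall
    intro y
    rw [norm_mul]
    exact mul_le_mul_of_nonneg_right (hB _) (norm_nonneg _)
  rwa [integral_const_mul] at h1

lemma cnv_continuous (hw : Integrable w volume) (hV'c : Continuous V') {B : ℝ}
    (hB : ∀ x, ‖V' x‖ ≤ B) : Continuous (cnv V' w) := by
  apply continuous_of_dominated (bound := fun y => B * ‖w y‖)
  · exact fun x => ((hV'c.comp (continuous_const.sub continuous_id)).aestronglyMeasurable).mul hw.1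
  · intro x
    apply Eventually.of_forall
    intro y
    rw [norm_mul]
    exact mul_le_mul_of_nonneg_right (hB _) (norm_nonneg _)
  · exact hw.norm.const_mul B
  · apply Eventually.of_forall
    intro y
    exact (hV'c.comp (continuous_id.sub continuous_const)).mul continuous_const

lemma pds_cnv {m : ℕ} {V : (Fin d → ℝ) → ℝ} (hw : Integrable w volume)
    (hVm : ContDiff ℝ (m : ℕ) V) {A : ℝ} (hA0 : 0 ≤ A)
    (hA : ∀ ℓ : List (Fin d), ℓ.length ≤ m → ∀ x, ‖pds ℓ V x‖ ≤ A) :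
    ∀ ℓ : List (Fin d), ℓ.length ≤ m → pds ℓ (cnv V w) = cnv (pds ℓ V) w := by
  intro ℓ
  induction ℓ with
  | nil => intro _; rfl
  | cons j ℓ ih =>
      intro hl
      simp only [List.length_cons] at hl
      rw [pds_cons, ih (by omega)]
      apply pd_cnv hw (differentiable_pds hVm ℓ (by omega))
        ((contDiff_pds hVm ℓ 1 (by omega)).continuous_fderiv (by norm_cast))
        (hA ℓ (by omega)) (L := d * A)
      intro x
      apply fderiv_pi_bound _ hA0
      intro i
      exact hA (i :: ℓ) (by simp only [List.length_cons]; omega) x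

lemma differentiable_pds_cnv {m : ℕ} {V : (Fin d → ℝ) → ℝ} (hw : Integrable w volume)
    (hVm : ContDiff ℝ (m : ℕ) V) {A : ℝ} (hA0 : 0 ≤ A)
    (hA : ∀ ℓ : List (Fin d), ℓ.length ≤ m → ∀ x, ‖pds ℓ V x‖ ≤ A)
    (ℓ : List (Fin d)) (hl : ℓ.length < m) : Differentiable ℝ (pds ℓ (cnv V w)) := by
  rw [pds_cnv hw hVm hA0 hA ℓ (le_of_lt hl)]
  intro x₀
  apply HasFDerivAt.differentiableAt
  apply hasFDerivAt_cnv hw (differentiable_pds hVm ℓ hl)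
    ((contDiff_pds hVm ℓ 1 (by omega)).continuous_fderiv (by norm_cast))
    (hA ℓ (le_of_lt hl)) (L := d * A)
  intro x
  apply fderiv_pi_bound _ hA0
  intro i
  exact hA (i :: ℓ) (by simp only [List.length_cons]; omega) x

end Conv


lemma l2norm_nonneg (f : (Fin d → ℝ) → E) : 0 ≤ l2norm f := ENNReal.toReal_nonneg

lemma hnorm_nonneg (m : ℕ) (f : (Fin d → ℝ) → E) : 0 ≤ hnorm d m f := Real.sqrt_nonneg _

lemma l2norm_md_le_hnorm {m : ℕ} (f : (Fin d → ℝ) → E) (β : Fin d → ℕ)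
    (hβ : (∑ i, β i) ≤ m) : l2norm (md β f) ≤ hnorm d m f := by
  have hβi : ∀ i, β i < m + 1 := by
    intro i
    have : β i ≤ ∑ j, β j := Finset.single_le_sum (fun j _ => Nat.zero_le _) (Finset.mem_univ i)
    omega
  set α : Fin d → Fin (m + 1) := fun i => ⟨β i, hβi i⟩ with hα
  have hcoe : (fun i => ((α i : ℕ))) = β := rfl
  have hterm : (if (∑ i, (α i : ℕ)) ≤ m then (l2norm (md (fun i => (α i : ℕ)) f)) ^ 2 else 0)
      = (l2norm (md β f)) ^ 2 := by
    rw [hcoe, if_pos hβ]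
  have hsum : (l2norm (md β f)) ^ 2 ≤ ∑ γ : Fin d → Fin (m + 1),
      if (∑ i, (γ i : ℕ)) ≤ m then (l2norm (md (fun i => (γ i : ℕ)) f)) ^ 2 else 0 := by
    rw [← hterm]
    apply Finset.single_le_sum (f := fun γ : Fin d → Fin (m+1) =>
      if (∑ i, (γ i : ℕ)) ≤ m then (l2norm (md (fun i => (γ i : ℕ)) f)) ^ 2 else 0)
      (fun γ _ => by positivity) (Finset.mem_univ α)
  calc l2norm (md β f) = Real.sqrt ((l2norm (md β f)) ^ 2) :=
        (Real.sqrt_sq (l2norm_nonneg _)).symm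
    _ ≤ hnorm d m f := Real.sqrt_le_sqrt hsum

lemma eLpNorm_pds_le_hnorm {m : ℕ} {u : (Fin d → ℝ) → ℂ} (hu : ContDiffL2 d m u)
    (ℓ : List (Fin d)) (hl : ℓ.length ≤ m) :
    eLpNorm (pds ℓ u) 2 volume ≤ ENNReal.ofReal (hnorm d m u) := by
  have hsum : (∑ i, ℓ.count i) ≤ m := by rw [sum_count]; exact hl
  have hmem : MemLp (md (fun i => ℓ.count i) u) 2 volume := hu.2 _ hsum
  rw [pds_eq_md hu.1 ℓ hl]
  rw [ENNReal.le_ofReal_iff_toReal_le hmem.2.ne (hnorm_nonneg m u)]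
  exact l2norm_md_le_hnorm u _ hsum

lemma aesm_list_sum {ι : Type*} (L : List ι) (F : ι → (Fin d → ℝ) → E)
    (h : ∀ p ∈ L, AEStronglyMeasurable (F p) (volume : Measure (Fin d → ℝ))) :
    AEStronglyMeasurable (fun x => (L.map (fun p => F p x)).sum) volume := by
  induction L with
  | nil => simpa using aestronglyMeasurable_const
  | cons p L ih =>
      simp only [List.map_cons, List.sum_cons]
      exact (h p (by simp)).add (ih (fun q hq => h q (by simp [hq])))

lemma eLpNorm_list_sum_le {ι : Type*} (L : List ι) (F : ι → (Fin d → ℝ) → E)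
    (h : ∀ p ∈ L, AEStronglyMeasurable (F p) (volume : Measure (Fin d → ℝ))) :
    eLpNorm (fun x => (L.map (fun p => F p x)).sum) 2 volume
      ≤ (L.map (fun p => eLpNorm (F p) 2 volume)).sum := by
  induction L with
  | nil => simp [eLpNorm_zero']
  | cons p L ih =>
      simp only [List.map_cons, List.sum_cons]
      calc eLpNorm (fun x => F p x + (L.map (fun q => F q x)).sum) 2 volume
          ≤ eLpNorm (F p) 2 volume
            + eLpNorm (fun x => (L.map (fun q => F q x)).sum) 2 volume :=
            eLpNorm_add_le (h p (by simp)) (aesm_list_sum L F (fun q hq => h q (by simp [hq])))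
              one_le_two
        _ ≤ _ := add_le_add le_rfl (ih (fun q hq => h q (by simp [hq])))

lemma list_sum_le_ennreal {ι : Type*} (L : List ι) (f : ι → ℝ≥0∞) (c : ℝ≥0∞)
    (h : ∀ p ∈ L, f p ≤ c) : (L.map f).sum ≤ L.length * c := by
  induction L with
  | nil => simp
  | cons p L ih =>
      simp only [List.map_cons, List.sum_cons, List.length_cons]
      calc f p + (L.map f).sum ≤ c + L.length * c :=
            add_le_add (h p (by simp)) (ih (fun q hq => h q (by simp [hq])))
        _ = (L.length + 1 : ℕ) * c := by
            push_cast
            ring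
  
lemma eLpNorm_bdd_mul {g ψ : (Fin d → ℝ) → ℂ} {K : ℝ} (hK : 0 ≤ K)
    (hg : ∀ x, ‖g x‖ ≤ K) :
    eLpNorm (fun x => g x * ψ x) 2 volume ≤ ENNReal.ofReal K * eLpNorm ψ 2 volume := by
  have h1 : eLpNorm (fun x => g x * ψ x) 2 volume ≤ eLpNorm ((K : ℝ) • ψ) 2 volume := by
    apply eLpNorm_mono
    intro x
    show ‖g x * ψ x‖ ≤ ‖K • ψ x‖
    rw [norm_mul, norm_smul, Real.norm_of_nonneg hK]
    exact mul_le_mul_of_nonneg_right (hg x) (norm_nonneg _)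
  have h2 : eLpNorm ((K : ℝ) • ψ) 2 volume = (‖K‖₊ : ℝ≥0∞) * eLpNorm ψ 2 volume :=
    eLpNorm_const_smul K ψ 2 volume
  apply (h1.trans_eq h2).trans
  gcongr
  rw [← ENNReal.ofReal_coe_nnreal]
  apply ENNReal.ofReal_le_ofReal
  simp [Real.nnnorm_of_nonneg hK, Real.toNNReal_of_nonneg hK]

lemma integral_norm_mul_le {u v : (Fin d → ℝ) → ℂ} (hu : MemLp u 2 (volume : Measure (Fin d → ℝ)))
    (hv : MemLp v 2 (volume : Measure (Fin d → ℝ))) :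
    (∫ y, ‖u y‖ * ‖v y‖) ≤ l2norm u * l2norm v := by
  set f := fun y : Fin d → ℝ => ‖u y‖
  set g := fun y : Fin d → ℝ => ‖v y‖
  have hf : MemLp f 2 (volume : Measure (Fin d → ℝ)) := hu.norm
  have hg : MemLp g 2 (volume : Measure (Fin d → ℝ)) := hv.norm
  have hpqr : (1 : ℝ≥0∞) / 1 = 1 / 2 + 1 / 2 := by
    rw [one_div, one_div (2:ℝ≥0∞), inv_one, ENNReal.inv_two_add_inv_two]
  have hfg : MemLp (f • g) 1 (volume : Measure (Fin d → ℝ)) := hg.smul hf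
  have hkey : eLpNorm (f • g) 1 volume ≤ eLpNorm f 2 volume * eLpNorm g 2 volume :=
    eLpNorm_smul_le_mul_eLpNorm hg.1 hf.1
  have h1 : (∫ y, ‖u y‖ * ‖v y‖) = ∫ y, ‖(f • g) y‖ := by
    apply integral_congr_ae
    apply Eventually.of_forall
    intro y
    show f y * g y = ‖f y * g y‖
    rw [Real.norm_of_nonneg (mul_nonneg (norm_nonneg _) (norm_nonneg _))]
  have h2 : (∫ y, ‖(f • g) y‖) = (eLpNorm (f • g) 1 volume).toReal := by
    rw [integral_norm_eq_lintegral_enorm hfg.1, eLpNorm_one_eq_lintegral_enorm]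
  rw [h1, h2]
  calc (eLpNorm (f • g) 1 volume).toReal
      ≤ (eLpNorm f 2 volume * eLpNorm g 2 volume).toReal :=
        ENNReal.toReal_mono (ENNReal.mul_ne_top hf.2.ne hg.2.ne) hkey
    _ = l2norm u * l2norm v := by
        rw [ENNReal.toReal_mul]
        unfold f g
        rw [eLpNorm_norm, eLpNorm_norm]
        rfl


lemma memℒp_of_contDiffL2 {m : ℕ} {u : (Fin d → ℝ) → ℂ} (hu : ContDiffL2 d m u) :
    MemLp u 2 (volume : Measure (Fin d → ℝ)) := by
  have := hu.2 (fun _ => 0) (by simp)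
  rwa [md_zero] at this

lemma vbound {m : ℕ} {V : (Fin d → ℝ) → ℝ} (hV : ContDiffBdd d m V) :
    ∃ A : ℝ, 0 ≤ A ∧ ∀ ℓ : List (Fin d), ℓ.length ≤ m → ∀ x, ‖pds ℓ V x‖ ≤ A := by
  have hch : ∀ α : Fin d → Fin (m+1), ∃ B : ℝ,
      ((∑ i, (α i : ℕ)) ≤ m → ∀ x, ‖md (fun i => (α i : ℕ)) V x‖ ≤ B) := by
    intro α
    by_cases hα : (∑ i, (α i : ℕ)) ≤ m
    · obtain ⟨B, hB⟩ := hV.2 (fun i => (α i : ℕ)) hα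
      exact ⟨B, fun _ => hB⟩
    · exact ⟨0, fun hc => absurd hc hα⟩
  choose B hB using hch
  refine ⟨∑ α, |B α|, Finset.sum_nonneg (fun _ _ => abs_nonneg _), ?_⟩
  intro ℓ hl x
  rw [pds_eq_md hV.1 ℓ hl]
  have hsum : (∑ i, ℓ.count i) ≤ m := by rw [sum_count]; exact hl
  have hβi : ∀ i, ℓ.count i < m + 1 := by
    intro i
    have : ℓ.count i ≤ ∑ j, ℓ.count j :=
      Finset.single_le_sum (f := fun j => ℓ.count j) (fun j _ => Nat.zero_le _)
        (Finset.mem_univ i)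
    omega
  set α : Fin d → Fin (m + 1) := fun i => ⟨ℓ.count i, hβi i⟩ with hα
  have hcoe : (fun i => ((α i : ℕ))) = fun i => ℓ.count i := rfl
  calc ‖md (fun i => ℓ.count i) V x‖ = ‖md (fun i => ((α i : ℕ))) V x‖ := by rw [hcoe]
    _ ≤ B α := hB α (by rw [hcoe]; exact hsum) x
    _ ≤ |B α| := le_abs_self _
    _ ≤ ∑ γ, |B γ| := Finset.single_le_sum (f := fun γ => |B γ|)
        (fun γ _ => abs_nonneg _) (Finset.mem_univ α)

lemma differentiable_pds_mul {n : ℕ} {φ ψ : (Fin d → ℝ) → ℂ}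
    (hφ : ∀ ℓ', ℓ'.length < n → Differentiable ℝ (pds ℓ' φ))
    (hψ : ∀ ℓ', ℓ'.length < n → Differentiable ℝ (pds ℓ' ψ))
    (ℓ : List (Fin d)) (hl : ℓ.length < n) :
    Differentiable ℝ (pds ℓ (fun x => φ x * ψ x)) := by
  rw [pds_mul hφ hψ ℓ hl.le]
  apply differentiable_list_sum
  intro p hp
  have hlen := splits_length hp
  exact (hφ p.1 (by omega)).mul (hψ p.2 (by omega))

end

theorem statement5 (d m : ℕ) (hd : 1 ≤ d) (V : (Fin d → ℝ) → ℝ)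
    (hV : ContDiffBdd d m V) :
    ∃ C : ℝ, 0 < C ∧ ∀ u h : (Fin d → ℝ) → ℂ,
      ContDiffL2 d m u → ContDiffL2 d m h →
      hnorm d m (fun x => ((∫ y, V (x - y) * ‖u y‖ ^ 2 : ℝ) : ℂ) * h x
          + 2 * ((∫ y, V (x - y) * (starRingEnd ℂ (u y) * h y).re : ℝ) : ℂ) * u x)
        ≤ C * l2norm u * hnorm d m u * hnorm d m h := by
  classical
  obtain ⟨A, hA0, hA⟩ := vbound hV
  set N : ℝ := Real.sqrt (Fintype.card (Fin d → Fin (m+1))) with hN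
  have hN0 : 0 ≤ N := Real.sqrt_nonneg _
  refine ⟨N * 2 ^ m * 3 * (A + 1) + 1, by positivity, ?_⟩
  intro u h hu hh
  -- notation
  set P := l2norm u with hP
  set HU := hnorm d m u with hHU
  set HH := hnorm d m h with hHH
  have hP0 : 0 ≤ P := l2norm_nonneg u
  have hHU0 : 0 ≤ HU := hnorm_nonneg m u
  have hHH0 : 0 ≤ HH := hnorm_nonneg m h
  have hPHU : P ≤ HU := by
    have := l2norm_md_le_hnorm (m := m) u (fun _ => 0) (by simp)
    rwa [md_zero] at this
  have hl2h : l2norm h ≤ HH := by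
    have := l2norm_md_le_hnorm (m := m) h (fun _ => 0) (by simp)
    rwa [md_zero] at this
  have hu2 : MemLp u 2 (volume : Measure (Fin d → ℝ)) := memℒp_of_contDiffL2 hu
  have hh2 : MemLp h 2 (volume : Measure (Fin d → ℝ)) := memℒp_of_contDiffL2 hh
  -- the two weights
  set w₁ : (Fin d → ℝ) → ℝ := fun y => ‖u y‖ ^ 2 with hw₁def
  set w₂ : (Fin d → ℝ) → ℝ := fun y => 2 * (starRingEnd ℂ (u y) * h y).re with hw₂def
  have hw₁ : Integrable w₁ volume := by
    rw [hw₁def]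
    exact (memLp_two_iff_integrable_sq_norm hu2.1).mp hu2
  have hnn : Integrable (fun y => ‖u y‖ * ‖h y‖) volume := by
    have hpqr : (1 : ℝ≥0∞) / 1 = 1 / 2 + 1 / 2 := by
      rw [one_div, one_div (2:ℝ≥0∞), inv_one, ENNReal.inv_two_add_inv_two]
    have : MemLp ((fun y => ‖u y‖) • (fun y => ‖h y‖)) 1 (volume : Measure (Fin d → ℝ)) :=
      hh2.norm.smul hu2.norm
    exact memLp_one_iff_integrable.mp this
  have hw₂aesm : AEStronglyMeasurable w₂ (volume : Measure (Fin d → ℝ)) := by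
    rw [hw₂def]
    apply AEStronglyMeasurable.const_mul
    apply Complex.continuous_re.comp_aestronglyMeasurable
    exact ((Complex.continuous_conj.comp_aestronglyMeasurable hu2.1).mul hh2.1)
  have hw₂ptbd : ∀ y, ‖w₂ y‖ ≤ 2 * (‖u y‖ * ‖h y‖) := by
    intro y
    rw [hw₂def]
    simp only [norm_mul, Real.norm_ofNat]
    apply mul_le_mul_of_nonneg_left _ (by norm_num)
    calc ‖(starRingEnd ℂ (u y) * h y).re‖ ≤ ‖starRingEnd ℂ (u y) * h y‖ :=
          Complex.abs_re_le_norm _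
      _ = ‖u y‖ * ‖h y‖ := by rw [norm_mul, RCLike.norm_conj]
  have hw₂ : Integrable w₂ volume := by
    apply (hnn.const_mul 2).mono' hw₂aesm
    exact Eventually.of_forall hw₂ptbd
  -- L¹ bounds for the weights
  have hW₁ : (∫ y, ‖w₁ y‖) ≤ P * P := by
    have h1 : (∫ y, ‖w₁ y‖) = ∫ y, ‖u y‖ * ‖u y‖ := by
      apply integral_congr_ae
      apply Eventually.of_forall
      intro y
      rw [hw₁def]
      simp [Real.norm_of_nonneg (sq_nonneg ‖u y‖), sq]
    rw [h1]
    exact integral_norm_mul_le hu2 hu2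
  have hW₂ : (∫ y, ‖w₂ y‖) ≤ 2 * (P * l2norm h) := by
    calc (∫ y, ‖w₂ y‖) ≤ ∫ y, 2 * (‖u y‖ * ‖h y‖) :=
          integral_mono hw₂.norm (hnn.const_mul 2) hw₂ptbd
      _ = 2 * ∫ y, ‖u y‖ * ‖h y‖ := integral_const_mul 2 _
      _ ≤ 2 * (P * l2norm h) := by
          apply mul_le_mul_of_nonneg_left (integral_norm_mul_le hu2 hh2) (by norm_num)
  -- the multipliers
  set φ₁ : (Fin d → ℝ) → ℂ := fun x => ((cnv V w₁ x : ℝ) : ℂ) with hφ₁def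
  set φ₂ : (Fin d → ℝ) → ℂ := fun x => ((cnv V w₂ x : ℝ) : ℂ) with hφ₂def
  set K₁ := A * ∫ y, ‖w₁ y‖ with hK₁
  set K₂ := A * ∫ y, ‖w₂ y‖ with hK₂
  have hIw₁ : 0 ≤ ∫ y, ‖w₁ y‖ := integral_nonneg (fun y => norm_nonneg _)
  have hIw₂ : 0 ≤ ∫ y, ‖w₂ y‖ := integral_nonneg (fun y => norm_nonneg _)
  have hK₁0 : 0 ≤ K₁ := mul_nonneg hA0 hIw₁
  have hK₂0 : 0 ≤ K₂ := mul_nonneg hA0 hIw₂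
  have hVm := hV.1
  -- generic facts for a weight
  have main : ∀ w : (Fin d → ℝ) → ℝ, Integrable w volume →
      (∀ ℓ' : List (Fin d), ℓ'.length < m →
        Differentiable ℝ (pds ℓ' (fun x => ((cnv V w x : ℝ) : ℂ))))
      ∧ (∀ ℓ' : List (Fin d), ℓ'.length ≤ m →
        pds ℓ' (fun x => ((cnv V w x : ℝ) : ℂ)) = fun x => ((cnv (pds ℓ' V) w x : ℝ) : ℂ)) := by
    intro w hw
    have hdc : ∀ ℓ' : List (Fin d), ℓ'.length < m → Differentiable ℝ (pds ℓ' (cnv V w)) :=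
      fun ℓ' hl => differentiable_pds_cnv hw hVm hA0 hA ℓ' hl
    constructor
    · intro ℓ' hl
      rw [pds_ofReal hdc ℓ' hl.le]
      exact Complex.ofRealCLM.differentiable.comp (hdc ℓ' hl)
    · intro ℓ' hl
      rw [pds_ofReal hdc ℓ' hl, pds_cnv hw hVm hA0 hA ℓ' hl]
  obtain ⟨hdφ₁, hrφ₁⟩ := main w₁ hw₁
  obtain ⟨hdφ₂, hrφ₂⟩ := main w₂ hw₂
  have hdu : ∀ ℓ' : List (Fin d), ℓ'.length < m → Differentiable ℝ (pds ℓ' u) :=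
    fun ℓ' hl => differentiable_pds hu.1 ℓ' hl
  have hdh : ∀ ℓ' : List (Fin d), ℓ'.length < m → Differentiable ℝ (pds ℓ' h) :=
    fun ℓ' hl => differentiable_pds hh.1 ℓ' hl
  -- pointwise bounds for pds of multipliers
  have hbd : ∀ (w : (Fin d → ℝ) → ℝ), Integrable w volume →
      (∀ ℓ' : List (Fin d), ℓ'.length ≤ m →
        pds ℓ' (fun x => ((cnv V w x : ℝ) : ℂ)) = fun x => ((cnv (pds ℓ' V) w x : ℝ) : ℂ)) →
      ∀ ℓ' : List (Fin d), ℓ'.length ≤ m → ∀ x,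
        ‖pds ℓ' (fun x => ((cnv V w x : ℝ) : ℂ)) x‖ ≤ A * ∫ y, ‖w y‖ := by
    intro w hw hr ℓ' hl x
    rw [hr ℓ' hl]
    rw [Complex.norm_real]
    exact cnv_bound hw (hA ℓ' hl) (continuous_pds hVm ℓ' hl).aestronglyMeasurable x
  have hbd₁ := hbd w₁ hw₁ hrφ₁
  have hbd₂ := hbd w₂ hw₂ hrφ₂
  -- continuity of pds of multipliers
  have hcontm : ∀ (w : (Fin d → ℝ) → ℝ), Integrable w volume →
      (∀ ℓ' : List (Fin d), ℓ'.length ≤ m →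
        pds ℓ' (fun x => ((cnv V w x : ℝ) : ℂ)) = fun x => ((cnv (pds ℓ' V) w x : ℝ) : ℂ)) →
      ∀ ℓ' : List (Fin d), ℓ'.length ≤ m →
        Continuous (pds ℓ' (fun x => ((cnv V w x : ℝ) : ℂ))) := by
    intro w hw hr ℓ' hl
    rw [hr ℓ' hl]
    exact Complex.continuous_ofReal.comp
      (cnv_continuous hw (continuous_pds hVm ℓ' hl) (hA ℓ' hl))
  have hcont₁ := hcontm w₁ hw₁ hrφ₁
  have hcont₂ := hcontm w₂ hw₂ hrφ₂
  -- the derivative-of-product estimate, generic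
  have est : ∀ (φ ψ : (Fin d → ℝ) → ℂ) (K : ℝ), 0 ≤ K →
      (∀ ℓ', List.length ℓ' < m → Differentiable ℝ (pds ℓ' φ)) →
      (∀ ℓ', List.length ℓ' ≤ m → ∀ x, ‖pds ℓ' φ x‖ ≤ K) →
      (∀ ℓ', List.length ℓ' ≤ m → Continuous (pds ℓ' φ)) →
      ContDiffL2 d m ψ →
      ∀ γ : Fin d → ℕ, (∑ i, γ i) ≤ m →
      eLpNorm (md γ (fun x => φ x * ψ x)) 2 volume
        ≤ (2 ^ m : ℕ) * ENNReal.ofReal (K * hnorm d m ψ) := by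
    intro φ ψ K hK0 hdφ hbdφ hcontφ hψ γ hγ
    set L := canon γ with hLdef
    have hL : L.length ≤ m := by rw [hLdef, length_canon]; exact hγ
    have hdψ : ∀ ℓ' : List (Fin d), ℓ'.length < m → Differentiable ℝ (pds ℓ' ψ) :=
      fun ℓ' hl => differentiable_pds hψ.1 ℓ' hl
    have hrep : md γ (fun x => φ x * ψ x)
        = fun x => ((splits L).map (fun p => pds p.1 φ x * pds p.2 ψ x)).sum := by
      rw [md_eq_pds, ← hLdef]
      exact pds_mul hdφ hdψ L hL
    rw [hrep]
    have hterm_meas : ∀ p ∈ splits L,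
        AEStronglyMeasurable (fun x => pds p.1 φ x * pds p.2 ψ x)
          (volume : Measure (Fin d → ℝ)) := by
      intro p hp
      have hlen := splits_length hp
      exact ((hcontφ p.1 (by omega)).mul (continuous_pds hψ.1 p.2 (by omega))).aestronglyMeasurable
    calc eLpNorm (fun x => ((splits L).map (fun p => pds p.1 φ x * pds p.2 ψ x)).sum) 2 volume
        ≤ ((splits L).map
            (fun p => eLpNorm (fun x => pds p.1 φ x * pds p.2 ψ x) 2 volume)).sum :=
          eLpNorm_list_sum_le (splits L) _ hterm_meas
      _ ≤ (splits L).length * ENNReal.ofReal (K * hnorm d m ψ) := by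
          apply list_sum_le_ennreal
          intro p hp
          have hlen := splits_length hp
          calc eLpNorm (fun x => pds p.1 φ x * pds p.2 ψ x) 2 volume
              ≤ ENNReal.ofReal K * eLpNorm (pds p.2 ψ) 2 volume :=
                eLpNorm_bdd_mul hK0 (fun x => hbdφ p.1 (by omega) x)
            _ ≤ ENNReal.ofReal K * ENNReal.ofReal (hnorm d m ψ) := by
                gcongr
                exact eLpNorm_pds_le_hnorm hψ p.2 (by omega)
            _ = ENNReal.ofReal (K * hnorm d m ψ) := (ENNReal.ofReal_mul hK0).symm
      _ ≤ (2 ^ m : ℕ) * ENNReal.ofReal (K * hnorm d m ψ) := by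
          gcongr
          rw [length_splits]
          exact_mod_cast Nat.pow_le_pow_right (by norm_num) hL
  -- the target function is T₁ + T₂
  set T₁ : (Fin d → ℝ) → ℂ := fun x => φ₁ x * h x with hT₁def
  set T₂ : (Fin d → ℝ) → ℂ := fun x => φ₂ x * u x with hT₂def
  have hFrw : (fun x => ((∫ y, V (x - y) * ‖u y‖ ^ 2 : ℝ) : ℂ) * h x
      + 2 * ((∫ y, V (x - y) * (starRingEnd ℂ (u y) * h y).re : ℝ) : ℂ) * u x)
      = fun x => T₁ x + T₂ x := by
    funext x
    show _ = ((∫ y, V (x - y) * ‖u y‖ ^ 2 : ℝ) : ℂ) * h x + ((cnv V w₂ x : ℝ) : ℂ) * u x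
    have h2 : cnv V w₂ x = 2 * ∫ y, V (x - y) * (starRingEnd ℂ (u y) * h y).re := by
      show (∫ y, V (x - y) * (2 * (starRingEnd ℂ (u y) * h y).re)) = _
      rw [← integral_const_mul]
      congr 1
      funext y
      ring
    rw [h2]
    push_cast
    ring
  rw [hFrw]
  -- differentiability of the two products
  have hdT₁ : ∀ ℓ' : List (Fin d), ℓ'.length < m → Differentiable ℝ (pds ℓ' T₁) :=
    fun ℓ' hl => differentiable_pds_mul hdφ₁ hdh ℓ' hl
  have hdT₂ : ∀ ℓ' : List (Fin d), ℓ'.length < m → Differentiable ℝ (pds ℓ' T₂) :=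
    fun ℓ' hl => differentiable_pds_mul hdφ₂ hdu ℓ' hl
  -- measurability of md of the products
  have haesm : ∀ (φ ψ : (Fin d → ℝ) → ℂ),
      (∀ ℓ', List.length ℓ' < m → Differentiable ℝ (pds ℓ' φ)) →
      (∀ ℓ', List.length ℓ' ≤ m → Continuous (pds ℓ' φ)) →
      ContDiffL2 d m ψ →
      ∀ γ : Fin d → ℕ, (∑ i, γ i) ≤ m →
      AEStronglyMeasurable (md γ (fun x => φ x * ψ x)) (volume : Measure (Fin d → ℝ)) := by
    intro φ ψ hdφ hcontφ hψ γ hγ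
    have hdψ : ∀ ℓ' : List (Fin d), ℓ'.length < m → Differentiable ℝ (pds ℓ' ψ) :=
      fun ℓ' hl => differentiable_pds hψ.1 ℓ' hl
    have hL : (canon γ).length ≤ m := by rw [length_canon]; exact hγ
    rw [md_eq_pds, pds_mul hdφ hdψ (canon γ) hL]
    apply aesm_list_sum
    intro p hp
    have hlen := splits_length hp
    exact ((hcontφ p.1 (by omega)).mul (continuous_pds hψ.1 p.2 (by omega))).aestronglyMeasurable
  -- uniform bound on l2norm of md γ of the sum
  set R := (2 ^ m : ℝ) * (K₁ * HH + K₂ * HU) with hRdef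
  have hR0 : 0 ≤ R := by
    apply mul_nonneg (by positivity)
    exact add_nonneg (mul_nonneg hK₁0 hHH0) (mul_nonneg hK₂0 hHU0)
  have hmd : ∀ γ : Fin d → ℕ, (∑ i, γ i) ≤ m →
      l2norm (md γ (fun x => T₁ x + T₂ x)) ≤ R := by
    intro γ hγ
    have hsplit : md γ (fun x => T₁ x + T₂ x)
        = fun x => md γ T₁ x + md γ T₂ x := by
      rw [md_eq_pds, md_eq_pds (f := T₁), md_eq_pds (f := T₂)]
      exact pds_add hdT₁ hdT₂ (canon γ) (by rw [length_canon]; exact hγ)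
    rw [hsplit]
    have hb₁ := est φ₁ h K₁ hK₁0 hdφ₁ hbd₁ hcont₁ hh γ hγ
    have hb₂ := est φ₂ u K₂ hK₂0 hdφ₂ hbd₂ hcont₂ hu γ hγ
    have hEsum : eLpNorm (fun x => md γ T₁ x + md γ T₂ x) 2 volume
        ≤ (2 ^ m : ℕ) * ENNReal.ofReal (K₁ * HH) + (2 ^ m : ℕ) * ENNReal.ofReal (K₂ * HU) := by
      calc eLpNorm (fun x => md γ T₁ x + md γ T₂ x) 2 volume
          ≤ eLpNorm (md γ T₁) 2 volume + eLpNorm (md γ T₂) 2 volume :=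
            eLpNorm_add_le (haesm φ₁ h hdφ₁ hcont₁ hh γ hγ)
              (haesm φ₂ u hdφ₂ hcont₂ hu γ hγ) one_le_two
        _ ≤ _ := add_le_add hb₁ hb₂
    have hto : ENNReal.ofReal R = ((2 ^ m : ℕ) : ℝ≥0∞)
        * (ENNReal.ofReal (K₁ * HH) + ENNReal.ofReal (K₂ * HU)) := by
      rw [hRdef]
      rw [ENNReal.ofReal_mul (p := (2:ℝ)^m) (by positivity)]
      congr 1
      · rw [show ((2:ℝ)^m) = ((2^m : ℕ) : ℝ) by push_cast; ring, ENNReal.ofReal_natCast]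
      · exact ENNReal.ofReal_add (mul_nonneg hK₁0 hHH0) (mul_nonneg hK₂0 hHU0)
    have hRofReal : (2 ^ m : ℕ) * ENNReal.ofReal (K₁ * HH)
        + (2 ^ m : ℕ) * ENNReal.ofReal (K₂ * HU) = ENNReal.ofReal R := by
      rw [hto, mul_add]
    rw [hRofReal] at hEsum
    exact ENNReal.toReal_le_of_le_ofReal hR0 hEsum
  -- sum over multi-indices
  have hhnorm : hnorm d m (fun x => T₁ x + T₂ x) ≤ N * R := by
    unfold hnorm
    have hsum : (∑ γ : Fin d → Fin (m + 1),
        if (∑ i, (γ i : ℕ)) ≤ m then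
          (l2norm (md (fun i => (γ i : ℕ)) (fun x => T₁ x + T₂ x))) ^ 2 else 0)
        ≤ ∑ _γ : Fin d → Fin (m + 1), R ^ 2 := by
      apply Finset.sum_le_sum
      intro γ _
      by_cases hγ : (∑ i, (γ i : ℕ)) ≤ m
      · rw [if_pos hγ]
        exact pow_le_pow_left₀ (l2norm_nonneg _) (hmd _ hγ) 2
      · rw [if_neg hγ]
        positivity
    calc Real.sqrt _ ≤ Real.sqrt (∑ _γ : Fin d → Fin (m + 1), R ^ 2) :=
          Real.sqrt_le_sqrt hsum
      _ = N * R := by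
          rw [Finset.sum_const, Finset.card_univ, nsmul_eq_mul, Real.sqrt_mul
            (by positivity), Real.sqrt_sq hR0, hN]
  -- final numeric estimate
  have hK₁le : K₁ ≤ A * (P * HU) := by
    rw [hK₁]
    apply mul_le_mul_of_nonneg_left _ hA0
    calc (∫ y, ‖w₁ y‖) ≤ P * P := hW₁
      _ ≤ P * HU := mul_le_mul_of_nonneg_left hPHU hP0
  have hK₂le : K₂ ≤ A * (2 * (P * HH)) := by
    rw [hK₂]
    apply mul_le_mul_of_nonneg_left _ hA0
    calc (∫ y, ‖w₂ y‖) ≤ 2 * (P * l2norm h) := hW₂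
      _ ≤ 2 * (P * HH) := by
          apply mul_le_mul_of_nonneg_left _ (by norm_num)
          exact mul_le_mul_of_nonneg_left hl2h hP0
  have hRle : R ≤ (2 : ℝ) ^ m * 3 * (A * (P * HU * HH)) := by
    rw [hRdef]
    have h1 : K₁ * HH ≤ A * (P * HU) * HH := mul_le_mul_of_nonneg_right hK₁le hHH0
    have h2 : K₂ * HU ≤ A * (2 * (P * HH)) * HU := mul_le_mul_of_nonneg_right hK₂le hHU0
    have h3 : A * (P * HU) * HH + A * (2 * (P * HH)) * HU = 3 * (A * (P * HU * HH)) := by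
      ring
    calc (2:ℝ) ^ m * (K₁ * HH + K₂ * HU)
        ≤ (2:ℝ) ^ m * (3 * (A * (P * HU * HH))) := by
          apply mul_le_mul_of_nonneg_left _ (by positivity)
          linarith [h1, h2, h3]
      _ = (2 : ℝ) ^ m * 3 * (A * (P * HU * HH)) := by ring
  have hX : 0 ≤ P * HU * HH := by positivity
  have hcoef : N * 2 ^ m * 3 * A ≤ N * 2 ^ m * 3 * (A + 1) + 1 := by
    have : N * 2 ^ m * 3 * A ≤ N * 2 ^ m * 3 * (A + 1) :=
      mul_le_mul_of_nonneg_left (by linarith) (by positivity)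
    linarith
  calc hnorm d m (fun x => T₁ x + T₂ x) ≤ N * R := hhnorm
    _ ≤ N * ((2:ℝ) ^ m * 3 * (A * (P * HU * HH))) := mul_le_mul_of_nonneg_left hRle hN0
    _ = (N * 2 ^ m * 3 * A) * (P * HU * HH) := by ring
    _ ≤ (N * 2 ^ m * 3 * (A + 1) + 1) * (P * HU * HH) :=
        mul_le_mul_of_nonneg_right hcoef hX
    _ = (N * 2 ^ m * 3 * (A + 1) + 1) * P * HU * HH := by ring
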